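/- There exists a constant C₀ > 0 such that for every integer r ≥ 1 and every integer α ≥ 0, ∑_{p > α·r²} (h(p)/h(1))·(p/(r+1)³)·(1 − (r+1)^{−2})^{p−1} ≤ C₀·e^{−α/5}. -/

import Mathlib

noncomputable def hfun (k : ℕ) : ℝ := (Nat.choose (2 * k) k : ℝ) / 4 ^ k

lemma hfun_nonneg (k : ℕ) : 0 ≤ hfun k := by unfold hfun; positivity

lemma hfun_rec (k : ℕ) : hfun (k + 1) = (2 * k + 1) / (2 * k + 2) * hfun k := by
  have hc := Nat.succ_mul_centralBinom_succ k
  have hc' : ((k : ℝ) + 1) * (Nat.centralBinom (k + 1) : ℝ)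
      = 2 * (2 * k + 1) * (Nat.centralBinom k : ℝ) := by exact_mod_cast hc
  have h1 : (Nat.choose (2 * (k + 1)) (k + 1) : ℝ) = (Nat.centralBinom (k + 1) : ℝ) := rfl
  have h2 : (Nat.choose (2 * k) k : ℝ) = (Nat.centralBinom k : ℝ) := rfl
  unfold hfun
  rw [h1, h2]
  have hk1 : ((k : ℝ) + 1) ≠ 0 := by positivity
  field_simp
  ring_nf
  ring_nf at hc'
  nlinarith [hc', pow_pos (show (0:ℝ) < 4 by norm_num) k]

lemma hfun_sqrt (k : ℕ) : hfun k * Real.sqrt (k + 1) ≤ 1 := by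
  induction k with
  | zero => simp [hfun]
  | succ k ih =>
    have key : (2 * (k:ℝ) + 1) * Real.sqrt ((k:ℝ) + 2) ≤ (2 * k + 2) * Real.sqrt ((k:ℝ) + 1) := by
      have ha : Real.sqrt ((k:ℝ) + 2) ^ 2 = (k:ℝ) + 2 := Real.sq_sqrt (by positivity)
      have hb : Real.sqrt ((k:ℝ) + 1) ^ 2 = (k:ℝ) + 1 := Real.sq_sqrt (by positivity)
      have hsq : ((2 * (k:ℝ) + 1) * Real.sqrt ((k:ℝ) + 2)) ^ 2
          ≤ ((2 * (k:ℝ) + 2) * Real.sqrt ((k:ℝ) + 1)) ^ 2 := by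
        rw [mul_pow, mul_pow, ha, hb]; nlinarith [sq_nonneg (k:ℝ)]
      have h1 : (0:ℝ) ≤ (2 * (k:ℝ) + 1) * Real.sqrt ((k:ℝ) + 2) := by positivity
      have h2 : (0:ℝ) ≤ (2 * (k:ℝ) + 2) * Real.sqrt ((k:ℝ) + 1) := by positivity
      exact (pow_le_pow_iff_left₀ h1 h2 two_ne_zero).mp hsq
    have h0 := hfun_nonneg k
    calc hfun (k + 1) * Real.sqrt ((k + 1 : ℕ) + 1)
        = hfun k * ((2 * (k:ℝ) + 1) * Real.sqrt ((k:ℝ) + 2)) / (2 * k + 2) := by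
          rw [hfun_rec]; push_cast; ring_nf
      _ ≤ hfun k * ((2 * (k:ℝ) + 2) * Real.sqrt ((k:ℝ) + 1)) / (2 * k + 2) := by
          gcongr
      _ = hfun k * Real.sqrt ((k:ℝ) + 1) := by field_simp
      _ ≤ 1 := ih

lemma sqrt_le_exp {y : ℝ} (hy : 0 ≤ y) : Real.sqrt y ≤ Real.exp (y / 2) := by
  have h1 : y ≤ Real.exp y := (Real.add_one_le_exp y).trans' (by linarith)
  have h2 : Real.exp y = Real.exp (y / 2) ^ 2 := by
    rw [sq, ← Real.exp_add]; ring_nf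
  calc Real.sqrt y ≤ Real.sqrt (Real.exp y) := Real.sqrt_le_sqrt h1
    _ = Real.exp (y / 2) := by rw [h2, Real.sqrt_sq (Real.exp_pos _).le]

set_option maxHeartbeats 1000000 in
/-- There is C₀ > 0 such that for every r ≥ 1 and integer α ≥ 0, the tail sum
∑_{p > α·r²} (h(p)/h(1))·(p/(r+1)³)·(1 − (r+1)^{−2})^{p−1} converges and is
bounded above by C₀·e^{−α/5}. -/
theorem perimeter_tail_bound :
    ∃ C₀ : ℝ, 0 < C₀ ∧ ∀ r : ℕ, 1 ≤ r → ∀ α : ℕ,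
      (Summable fun p : ℕ =>
        if α * r ^ 2 < p then
          (hfun p / hfun 1) * ((p : ℝ) / ((r : ℝ) + 1) ^ 3) *
            (1 - ((r : ℝ) + 1) ^ (-2 : ℤ)) ^ (p - 1)
        else 0) ∧
      (∑' p : ℕ,
          if α * r ^ 2 < p then
            (hfun p / hfun 1) * ((p : ℝ) / ((r : ℝ) + 1) ^ 3) *
              (1 - ((r : ℝ) + 1) ^ (-2 : ℤ)) ^ (p - 1)
          else 0) ≤
        C₀ * Real.exp (-(α : ℝ) / 5) := by
  refine ⟨10, by norm_num, ?_⟩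
  intro r hr α
  have hr1 : (1:ℝ) ≤ (r:ℝ) := by exact_mod_cast hr
  set R : ℝ := (r : ℝ) + 1 with hRdef
  have hR2 : (2:ℝ) ≤ R := by rw [hRdef]; linarith
  have hR0 : (0:ℝ) < R := by linarith
  set c : ℝ := 1 / R ^ 2 with hcdef
  have hc0 : 0 < c := by positivity
  have hc4 : c ≤ 1 / 4 := by
    rw [hcdef, div_le_div_iff₀ (by positivity) (by norm_num)]
    nlinarith
  have hzpow : ((r : ℝ) + 1) ^ (-2 : ℤ) = c := by
    rw [hcdef, ← hRdef, zpow_neg, ← one_div, show (2:ℤ) = ((2:ℕ):ℤ) from rfl,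
      zpow_natCast]
  have hq0 : (0:ℝ) ≤ 1 - c := by linarith
  have hqe : 1 - c ≤ Real.exp (-c) := by linarith [Real.add_one_le_exp (-c)]
  set ρ : ℝ := Real.exp (-(4 * c / 5)) with hρdef
  have hρ0 : (0:ℝ) ≤ ρ := (Real.exp_pos _).le
  have hρ1 : ρ < 1 := by
    rw [hρdef]; exact Real.exp_lt_one_iff.mpr (by linarith)
  set K : ℝ := 2 / R ^ 3 * Real.sqrt (5 / (2 * c)) * Real.exp c with hKdef
  have hK0 : 0 ≤ K := by positivity
  set N : ℕ := α * r ^ 2 with hNdef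
  have hh1 : hfun 1 = 1 / 2 := by norm_num [hfun]
  -- core pointwise bound
  have hcore : ∀ p : ℕ, N < p →
      (hfun p / hfun 1) * ((p : ℝ) / R ^ 3) * (1 - ((r : ℝ) + 1) ^ (-2 : ℤ)) ^ (p - 1)
        ≤ K * ρ ^ p := by
    intro p hp
    have hp1 : 1 ≤ p := lt_of_le_of_lt (Nat.zero_le N) hp
    rw [hzpow]
    have hsp : hfun p * p ≤ Real.sqrt p := by
      have h2 : Real.sqrt (p:ℝ) ≤ Real.sqrt ((p:ℝ) + 1) := Real.sqrt_le_sqrt (by linarith)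
      have h3 : hfun p * Real.sqrt (p:ℝ) ≤ 1 :=
        le_trans (mul_le_mul_of_nonneg_left h2 (hfun_nonneg p)) (hfun_sqrt p)
      calc hfun p * p = hfun p * Real.sqrt (p:ℝ) * Real.sqrt (p:ℝ) := by
            rw [mul_assoc, Real.mul_self_sqrt (Nat.cast_nonneg p)]
        _ ≤ 1 * Real.sqrt (p:ℝ) := mul_le_mul_of_nonneg_right h3 (Real.sqrt_nonneg _)
        _ = Real.sqrt (p:ℝ) := one_mul _
    have hsqp : Real.sqrt (p:ℝ) ≤ Real.sqrt (5 / (2 * c)) * Real.exp (c * p / 5) := by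
      have hpe : Real.sqrt (p:ℝ)
          = Real.sqrt (5 / (2 * c)) * Real.sqrt (2 * c * p / 5) := by
        rw [← Real.sqrt_mul (by positivity)]
        congr 1
        field_simp
      have h5 := sqrt_le_exp (show (0:ℝ) ≤ 2 * c * p / 5 by positivity)
      have heq : (2 * c * (p:ℝ) / 5) / 2 = c * p / 5 := by ring
      rw [heq] at h5
      rw [hpe]
      exact mul_le_mul_of_nonneg_left h5 (Real.sqrt_nonneg _)
    have hqp : (1 - c) ^ (p - 1) ≤ Real.exp c * Real.exp (-(c * p)) := by
      have h1 : (1 - c) ^ (p - 1) ≤ Real.exp (-c) ^ (p - 1) :=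
        pow_le_pow_left₀ hq0 hqe _
      have h2 : Real.exp (-c) ^ (p - 1) = Real.exp (c + -(c * p)) := by
        rw [← Real.exp_nat_mul, Nat.cast_sub hp1]
        congr 1
        push_cast; ring
      rw [h2, Real.exp_add] at h1
      exact h1
    calc (hfun p / hfun 1) * ((p : ℝ) / R ^ 3) * (1 - c) ^ (p - 1)
        = (2 / R ^ 3) * (hfun p * p) * (1 - c) ^ (p - 1) := by rw [hh1]; ring
      _ ≤ (2 / R ^ 3) * (Real.sqrt (5 / (2 * c)) * Real.exp (c * p / 5))
            * (Real.exp c * Real.exp (-(c * p))) := by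
          apply mul_le_mul (mul_le_mul_of_nonneg_left (hsp.trans hsqp) (by positivity)) hqp
            (by positivity) (by positivity)
      _ = (2 / R ^ 3 * Real.sqrt (5 / (2 * c)))
            * (Real.exp (c * ↑p / 5) * (Real.exp c * Real.exp (-(c * ↑p)))) := by ring
      _ = K * ρ ^ p := by
          have hexp : Real.exp (c * (p:ℝ) / 5) * (Real.exp c * Real.exp (-(c * (p:ℝ))))
              = Real.exp c * Real.exp ((p:ℝ) * -(4 * c / 5)) := by
            rw [← Real.exp_add, ← Real.exp_add, ← Real.exp_add]
            congr 1; ring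
          rw [hexp, hKdef, hρdef, ← Real.exp_nat_mul]
          ring
  -- nonnegativity of the summand
  have hf0 : ∀ p : ℕ, 0 ≤ (if N < p then
      (hfun p / hfun 1) * ((p : ℝ) / R ^ 3) * (1 - ((r : ℝ) + 1) ^ (-2 : ℤ)) ^ (p - 1)
      else 0) := by
    intro p
    split_ifs
    · rw [hzpow]
      have := hfun_nonneg p
      have := hfun_nonneg 1
      positivity
    · exact le_rfl
  have hgsum : Summable (fun p : ℕ => K * ρ ^ p) :=
    (summable_geometric_of_lt_one hρ0 hρ1).mul_left K
  have hfg : ∀ p : ℕ, (if N < p then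
      (hfun p / hfun 1) * ((p : ℝ) / R ^ 3) * (1 - ((r : ℝ) + 1) ^ (-2 : ℤ)) ^ (p - 1)
      else 0) ≤ (if N < p then K * ρ ^ p else 0) := by
    intro p
    split_ifs with h
    · exact hcore p h
    · exact le_rfl
  have hg'le : ∀ p : ℕ, (if N < p then K * ρ ^ p else 0) ≤ K * ρ ^ p := by
    intro p
    split_ifs
    · exact le_rfl
    · positivity
  have hg'0 : ∀ p : ℕ, 0 ≤ (if N < p then K * ρ ^ p else 0) := by
    intro p
    split_ifs
    · positivity
    · exact le_rfl
  have hg'sum : Summable (fun p : ℕ => if N < p then K * ρ ^ p else 0) :=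
    Summable.of_nonneg_of_le hg'0 hg'le hgsum
  have hfsum : Summable (fun p : ℕ => if N < p then
      (hfun p / hfun 1) * ((p : ℝ) / R ^ 3) * (1 - ((r : ℝ) + 1) ^ (-2 : ℤ)) ^ (p - 1)
      else 0) := Summable.of_nonneg_of_le hf0 (fun p => (hfg p).trans (hg'le p)) hgsum
  refine ⟨hfsum, ?_⟩
  have hcalc : (∑' p : ℕ, (if N < p then K * ρ ^ p else 0))
      = K * ρ ^ (N + 1) * (1 - ρ)⁻¹ := by
    have h0 : ∑ i ∈ Finset.range (N + 1), (if N < i then K * ρ ^ i else 0) = 0 :=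
      Finset.sum_eq_zero (fun i hi => by
        rw [if_neg]
        have := Finset.mem_range.mp hi
        omega)
    rw [← Summable.sum_add_tsum_nat_add (N + 1) hg'sum, h0, zero_add]
    have hcg : ∀ i : ℕ, (if N < i + (N + 1) then K * ρ ^ (i + (N + 1)) else 0)
        = (K * ρ ^ (N + 1)) * ρ ^ i := by
      intro i
      rw [if_pos (by omega), pow_add]
      ring
    rw [tsum_congr hcg, tsum_mul_left, tsum_geometric_of_lt_one hρ0 hρ1]
  have hρN : ρ ^ (N + 1) ≤ Real.exp (-(α : ℝ) / 5) := by
    rw [hρdef, ← Real.exp_nat_mul]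
    apply Real.exp_le_exp.mpr
    have hNc : ((N : ℕ) : ℝ) = (α : ℝ) * (r : ℝ) ^ 2 := by rw [hNdef]; push_cast; ring
    have hRr : R ^ 2 ≤ 4 * (r : ℝ) ^ 2 := by rw [hRdef]; nlinarith
    have hα0 : (0:ℝ) ≤ (α : ℝ) := Nat.cast_nonneg α
    have hR2pos : (0:ℝ) < R ^ 2 := by positivity
    have key : (α : ℝ) ≤ 4 * (1 / R ^ 2) * (N : ℝ) := by
      rw [hNc]
      have h2 : (α : ℝ) * R ^ 2 ≤ 4 * ((α : ℝ) * (r : ℝ) ^ 2) := by nlinarith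
      calc (α : ℝ) = (α : ℝ) * R ^ 2 / R ^ 2 := by field_simp
        _ ≤ 4 * ((α : ℝ) * (r : ℝ) ^ 2) / R ^ 2 := by gcongr
        _ = 4 * (1 / R ^ 2) * ((α : ℝ) * (r : ℝ) ^ 2) := by ring
    have hN0 : (0:ℝ) ≤ (N : ℝ) := Nat.cast_nonneg N
    push_cast
    rw [hcdef]
    nlinarith [key, hc0, hN0]
  have h1ρ : 2 * c / 3 ≤ 1 - ρ := by
    have he1 : 1 + 4 * c / 5 ≤ Real.exp (4 * c / 5) := by
      linarith [Real.add_one_le_exp (4 * c / 5)]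
    have he2 : ρ ≤ (1 + 4 * c / 5)⁻¹ := by
      rw [hρdef, Real.exp_neg]
      exact inv_anti₀ (by linarith) he1
    have he3 : (1 + 4 * c / 5)⁻¹ ≤ 1 - 2 * c / 3 := by
      rw [← one_div, div_le_iff₀ (by linarith : (0:ℝ) < 1 + 4 * c / 5)]
      nlinarith
    linarith
  have h1ρpos : (0:ℝ) < 1 - ρ := lt_of_lt_of_le (by positivity) h1ρ
  have hinvρ : (1 - ρ)⁻¹ ≤ (2 * c / 3)⁻¹ := inv_anti₀ (by positivity) h1ρ
  have hRne : R ≠ 0 := ne_of_gt hR0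
  have hsq : Real.sqrt (5 / (2 * c)) ≤ 1.6 * R := by
    have h52 : 5 / (2 * c) ≤ (1.6 * R) ^ 2 := by
      have he : 5 / (2 * c) = 5 * R ^ 2 / 2 := by rw [hcdef]; field_simp
      rw [he]
      nlinarith [sq_nonneg R]
    calc Real.sqrt (5 / (2 * c)) ≤ Real.sqrt ((1.6 * R) ^ 2) := Real.sqrt_le_sqrt h52
      _ = 1.6 * R := Real.sqrt_sq (by positivity)
  have hexpc : Real.exp c ≤ 4 / 3 := by
    have h2 : (3/4 : ℝ) ≤ Real.exp (-c) := by linarith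
    have h3 : Real.exp c = (Real.exp (-c))⁻¹ := by rw [← Real.exp_neg, neg_neg]
    rw [h3]
    calc (Real.exp (-c))⁻¹ ≤ ((3/4 : ℝ))⁻¹ := inv_anti₀ (by norm_num) h2
      _ = 4 / 3 := by norm_num
  have hconst : K * (1 - ρ)⁻¹ ≤ 10 := by
    calc K * (1 - ρ)⁻¹ ≤ (2 / R ^ 3 * (1.6 * R) * (4 / 3)) * (2 * c / 3)⁻¹ := by
          apply mul_le_mul ?_ hinvρ (inv_nonneg.mpr h1ρpos.le) (by positivity)
          rw [hKdef]
          exact mul_le_mul (mul_le_mul_of_nonneg_left hsq (by positivity)) hexpc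
            (Real.exp_pos _).le (by positivity)
      _ = 32 / 5 := by rw [hcdef]; field_simp; ring
      _ ≤ 10 := by norm_num
  calc (∑' p : ℕ, (if N < p then
        (hfun p / hfun 1) * ((p : ℝ) / R ^ 3) * (1 - ((r : ℝ) + 1) ^ (-2 : ℤ)) ^ (p - 1)
        else 0))
      ≤ ∑' p : ℕ, (if N < p then K * ρ ^ p else 0) := Summable.tsum_le_tsum hfg hfsum hg'sum
    _ = K * ρ ^ (N + 1) * (1 - ρ)⁻¹ := hcalc
    _ = (K * (1 - ρ)⁻¹) * ρ ^ (N + 1) := by ring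
    _ ≤ 10 * Real.exp (-(α : ℝ) / 5) :=
        mul_le_mul hconst hρN (pow_nonneg hρ0 _) (by norm_num)
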